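/- (Necessity direction of the Brown–Halmos characterization, abstract form.) In the abstract setting, let X be a bounded linear operator on K such that X Nᵢ = Nᵢ X and X Nᵢ* = Nᵢ* X for i = 1, 2, 3, and let T : H → H be the compression T = P X|_H. Then T T₁ = T₂* T T₃, T T₂ = T₁* T T₃, and T₃* T T₃ = T. -/

import Mathlib

open ContinuousLinearMap
open scoped ComplexInnerProductSpace

/-- The restriction of a continuous linear operator to an invariant subspace, as a
continuous linear operator on that subspace. -/
noncomputable def restrictCLM {K : Type*} [NormedAddCommGroup K] [InnerProductSpace ℂ K]
    (N : K →L[ℂ] K) (H : Submodule ℂ K) (hN : ∀ x ∈ H, N x ∈ H) : H →L[ℂ] H where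
  toFun x := ⟨N x, hN x x.2⟩
  map_add' x y := by ext; simp
  map_smul' c x := by ext; simp
  cont := (N.continuous.comp continuous_subtype_val).subtype_mk _

theorem compression_satisfies_brownHalmos
    {K : Type*} [NormedAddCommGroup K] [InnerProductSpace ℂ K] [CompleteSpace K]
    (N₁ N₂ N₃ : K →L[ℂ] K)
    -- the tuple is commuting
    (hc : ∀ M ∈ ({N₁, N₂, N₃} : Set (K →L[ℂ] K)), ∀ M' ∈ ({N₁, N₂, N₃} : Set (K →L[ℂ] K)),
      M * M' = M' * M)
    -- each `Nᵢ` is normal and the commutation extends to adjoints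
    (hcadj : ∀ M ∈ ({N₁, N₂, N₃} : Set (K →L[ℂ] K)), ∀ M' ∈ ({N₁, N₂, N₃} : Set (K →L[ℂ] K)),
      M * adjoint M' = adjoint M' * M)
    (hU₁ : adjoint N₃ * N₃ = 1) (hU₂ : N₃ * adjoint N₃ = 1)
    (hrel₁ : N₁ = adjoint N₂ * N₃) (hrel₂ : N₂ = adjoint N₁ * N₃)
    -- `H` is a closed subspace invariant under `N₁, N₂, N₃`
    (H : Submodule ℂ K) (hH : IsClosed (H : Set K)) [CompleteSpace H]
    (hinv₁ : ∀ x ∈ H, N₁ x ∈ H) (hinv₂ : ∀ x ∈ H, N₂ x ∈ H) (hinv₃ : ∀ x ∈ H, N₃ x ∈ H)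
    -- `X` commutes with the `Nᵢ` and with their adjoints
    (X : K →L[ℂ] K)
    (hX : ∀ M ∈ ({N₁, N₂, N₃} : Set (K →L[ℂ] K)), X * M = M * X)
    (hXadj : ∀ M ∈ ({N₁, N₂, N₃} : Set (K →L[ℂ] K)), X * adjoint M = adjoint M * X)
    -- `T` is the compression of `X` to `H`
    (T : H →L[ℂ] H) (hT : T = (H.orthogonalProjection).comp (X.comp H.subtypeL)) :
    T * restrictCLM N₁ H hinv₁ =
        adjoint (restrictCLM N₂ H hinv₂) * T * restrictCLM N₃ H hinv₃ ∧
      T * restrictCLM N₂ H hinv₂ =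
        adjoint (restrictCLM N₁ H hinv₁) * T * restrictCLM N₃ H hinv₃ ∧
      adjoint (restrictCLM N₃ H hinv₃) * T * restrictCLM N₃ H hinv₃ = T := by
  have m₁ : N₁ ∈ ({N₁, N₂, N₃} : Set (K →L[ℂ] K)) := by simp
  have m₂ : N₂ ∈ ({N₁, N₂, N₃} : Set (K →L[ℂ] K)) := by simp
  have m₃ : N₃ ∈ ({N₁, N₂, N₃} : Set (K →L[ℂ] K)) := by simp
  -- operator-level identities in `K`
  have e₁ : X * N₁ = adjoint N₂ * (X * N₃) := by
    rw [hrel₁, ← mul_assoc, ← mul_assoc, hXadj N₂ m₂]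
  have e₂ : X * N₂ = adjoint N₁ * (X * N₃) := by
    rw [hrel₂, ← mul_assoc, ← mul_assoc, hXadj N₁ m₁]
  have e₃ : adjoint N₃ * (X * N₃) = X := by
    rw [← mul_assoc, ← hXadj N₃ m₃, mul_assoc, hU₁, mul_one]
  refine ⟨?_, ?_, ?_⟩
  · refine ContinuousLinearMap.ext fun x => ?_
    apply ext_inner_right ℂ
    intro y
    have lhs : (T * restrictCLM N₁ H hinv₁) x =
        H.orthogonalProjection ((X * N₁) (x : K)) := by
      simp [hT, restrictCLM, mul_apply]
    have rhs : ⟪(adjoint (restrictCLM N₂ H hinv₂) * T * restrictCLM N₃ H hinv₃) x, y⟫ =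
        ⟪(adjoint N₂ * (X * N₃)) (x : K), (y : K)⟫ := by
      rw [ContinuousLinearMap.mul_apply, ContinuousLinearMap.mul_apply, adjoint_inner_left]
      have : T (restrictCLM N₃ H hinv₃ x) =
          H.orthogonalProjection ((X * N₃) (x : K)) := by
        simp [hT, restrictCLM, mul_apply]
      rw [this, Submodule.inner_orthogonalProjection_eq_of_mem_right]
      simp [restrictCLM, mul_apply, adjoint_inner_left]
    rw [lhs, rhs, Submodule.inner_orthogonalProjection_eq_of_mem_right, e₁]
  · refine ContinuousLinearMap.ext fun x => ?_
    apply ext_inner_right ℂ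
    intro y
    have lhs : (T * restrictCLM N₂ H hinv₂) x =
        H.orthogonalProjection ((X * N₂) (x : K)) := by
      simp [hT, restrictCLM, mul_apply]
    have rhs : ⟪(adjoint (restrictCLM N₁ H hinv₁) * T * restrictCLM N₃ H hinv₃) x, y⟫ =
        ⟪(adjoint N₁ * (X * N₃)) (x : K), (y : K)⟫ := by
      rw [ContinuousLinearMap.mul_apply, ContinuousLinearMap.mul_apply, adjoint_inner_left]
      have : T (restrictCLM N₃ H hinv₃ x) =
          H.orthogonalProjection ((X * N₃) (x : K)) := by
        simp [hT, restrictCLM, mul_apply]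
      rw [this, Submodule.inner_orthogonalProjection_eq_of_mem_right]
      simp [restrictCLM, mul_apply, adjoint_inner_left]
    rw [lhs, rhs, Submodule.inner_orthogonalProjection_eq_of_mem_right, e₂]
  · refine ContinuousLinearMap.ext fun x => ?_
    apply ext_inner_right ℂ
    intro y
    have rhs : ⟪T x, y⟫ = ⟪X (x : K), (y : K)⟫ := by
      rw [hT]
      simp only [coe_comp', Function.comp_apply, Submodule.coe_subtypeL', Submodule.coe_subtype]
      rw [Submodule.inner_orthogonalProjection_eq_of_mem_right]
    have lhs : ⟪(adjoint (restrictCLM N₃ H hinv₃) * T * restrictCLM N₃ H hinv₃) x, y⟫ =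
        ⟪(adjoint N₃ * (X * N₃)) (x : K), (y : K)⟫ := by
      rw [ContinuousLinearMap.mul_apply, ContinuousLinearMap.mul_apply, adjoint_inner_left]
      have : T (restrictCLM N₃ H hinv₃ x) =
          H.orthogonalProjection ((X * N₃) (x : K)) := by
        simp [hT, restrictCLM, mul_apply]
      rw [this, Submodule.inner_orthogonalProjection_eq_of_mem_right]
      simp [restrictCLM, mul_apply, adjoint_inner_left]
    rw [lhs, rhs, e₃]
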